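/- Let θ, θ^W > 0 and define J̃_s(x) = (1/s!) θ^{(s+1)/2} ∫_{−∞}^{0} (2π θ^W)^{−1/2} exp(−|√θ y − x|²/(2θ^W)) He_s(y) dy for s ≥ 0, with the convention J̃_{−1} ≡ 0, and define H_s(x) = (1/s!) √(θ^W/(2π)) θ^{(s−1)/2} He_{s−1}(0) exp(−x²/(2θ^W)). Then for every integer s ≥ 1 and all x ∈ ℝ, J̃_s(x) = (1/s)[(θ^W − θ) J̃_{s−2}(x) + x J̃_{s−1}(x)] − H_s(x). -/

import Mathlib

open MeasureTheory Real

/-- Probabilists' Hermite polynomial `He n x`, with the convention `He n ≡ 0` for `n < 0`. -/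
noncomputable def He (n : ℤ) (x : ℝ) : ℝ :=
  if n < 0 then 0 else Polynomial.aeval x (Polynomial.hermite n.toNat)

/-- `J̃_s(x) = (1/s!) θ^{(s+1)/2} ∫_{−∞}^0 (2πθ^W)^{−1/2} exp(−|√θ y − x|²/(2θ^W)) He_s(y) dy`
for `s ≥ 0`, with the convention `J̃_s ≡ 0` for `s < 0`. -/
noncomputable def Jt (θ θW : ℝ) (s : ℤ) (x : ℝ) : ℝ :=
  if s < 0 then 0 else
    (1 / (Nat.factorial s.toNat)) * θ ^ (((s : ℝ) + 1) / 2) *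
      ∫ y in Set.Iio (0 : ℝ), (2 * Real.pi * θW) ^ (-(1 : ℝ) / 2) *
        Real.exp (-(Real.sqrt θ * y - x) ^ 2 / (2 * θW)) * He s y

/-- `H_s(x) = (1/s!) √(θ^W/(2π)) θ^{(s−1)/2} He_{s−1}(0) exp(−x²/(2θ^W))`. -/
noncomputable def HH (θ θW : ℝ) (s : ℕ) (x : ℝ) : ℝ :=
  (1 / (Nat.factorial s)) * Real.sqrt (θW / (2 * Real.pi)) *
    θ ^ (((s : ℝ) - 1) / 2) * He ((s : ℤ) - 1) 0 * Real.exp (-x ^ 2 / (2 * θW))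

open Polynomial Filter Set

lemma derivative_hermite_succ (m : ℕ) :
    derivative (hermite (m+1)) = C ((m:ℤ)+1) * hermite m := by
  induction m with
  | zero => simp [hermite_one, hermite_zero]
  | succ m ih =>
    rw [hermite_succ (m+1), derivative_sub, derivative_mul, derivative_X, ih,
      derivative_C_mul, hermite_succ m]
    push_cast
    simp only [map_add, map_one, map_ofNat]
    ring

lemma He_of_nat (m : ℕ) (y : ℝ) : He (m : ℤ) y = aeval y (hermite m) := by
  rw [He, if_neg (by exact_mod_cast Int.not_lt.mpr (Int.natCast_nonneg m)), Int.toNat_natCast]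

lemma aeval_derivative_hermite (m : ℕ) (y : ℝ) :
    (aeval y (derivative (hermite m)) : ℝ) = (m : ℝ) * He ((m:ℤ)-1) y := by
  cases m with
  | zero => simp [hermite_zero, He]
  | succ m =>
    rw [derivative_hermite_succ, map_mul, aeval_C]
    have : ((m:ℤ)+1-1) = (m:ℤ) := by ring
    rw [show ((m+1:ℕ):ℤ) - 1 = (m:ℤ) by push_cast; ring, He_of_nat]
    push_cast
    simp [algebraMap_int_eq]

lemma hasDerivAt_He (n : ℤ) (y : ℝ) :
    HasDerivAt (He n) ((n : ℝ) * He (n-1) y) y := by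
  rcases lt_or_ge n 0 with h | h
  · have h1 : He (n-1) y = 0 := if_pos (by omega)
    rw [show He n = fun _ => (0:ℝ) from funext fun z => if_pos h, h1, mul_zero]
    exact hasDerivAt_const y 0
  · obtain ⟨m, rfl⟩ : ∃ m : ℕ, n = (m : ℤ) := ⟨n.toNat, (Int.toNat_of_nonneg h).symm⟩
    have : He (m : ℤ) = fun z => (aeval z (hermite m) : ℝ) := funext fun z => He_of_nat m z
    rw [this]
    have := Polynomial.hasDerivAt_aeval (q := hermite m) y
    rwa [aeval_derivative_hermite] at this

lemma He_succ (m : ℕ) (y : ℝ) :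
    He ((m:ℤ)+1) y = y * He (m:ℤ) y - (m:ℝ) * He ((m:ℤ)-1) y := by
  rw [show (m:ℤ)+1 = ((m+1:ℕ):ℤ) by push_cast; ring, He_of_nat, hermite_succ, map_sub,
    map_mul, aeval_X, aeval_derivative_hermite, He_of_nat]

section
variable {θ θW x : ℝ}

lemma gauss_bound (hθ : 0 < θ) (hθW : 0 < θW) (y : ℝ) :
    Real.exp (-(Real.sqrt θ * y - x) ^ 2 / (2 * θW)) ≤
      Real.exp (x ^ 2 / (2 * θW)) * Real.exp (-(θ / (4 * θW)) * y ^ 2) := by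
  rw [← Real.exp_add]
  apply Real.exp_le_exp.mpr
  have key : -(Real.sqrt θ * y - x) ^ 2 ≤ x ^ 2 - θ / 2 * y ^ 2 := by
    nlinarith [sq_nonneg (Real.sqrt θ * y - 2 * x), Real.sq_sqrt hθ.le]
  have h2 : -(Real.sqrt θ * y - x) ^ 2 / (2 * θW) ≤ (x ^ 2 - θ / 2 * y ^ 2) / (2 * θW) :=
    div_le_div_of_nonneg_right key (by positivity) |>.trans_eq rfl
  calc -(Real.sqrt θ * y - x) ^ 2 / (2 * θW) ≤ (x ^ 2 - θ / 2 * y ^ 2) / (2 * θW) := h2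
    _ = x ^ 2 / (2 * θW) + -(θ / (4 * θW)) * y ^ 2 := by field_simp; ring

lemma integrable_g_pow (hθ : 0 < θ) (hθW : 0 < θW) (x : ℝ) (k : ℕ) :
    Integrable (fun y : ℝ => Real.exp (-(Real.sqrt θ * y - x) ^ 2 / (2 * θW)) * y ^ k) := by
  have hb : (0:ℝ) < θ / (4 * θW) := by positivity
  have hk : (-1:ℝ) < (k:ℝ) := lt_of_lt_of_le (by norm_num) (Nat.cast_nonneg k)
  have h1 := (integrable_rpow_mul_exp_neg_mul_sq hb hk).norm
  have h2 := h1.const_mul (Real.exp (x ^ 2 / (2 * θW)))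
  apply h2.mono'
  · apply Continuous.aestronglyMeasurable
    fun_prop
  · filter_upwards with y
    rw [Real.norm_eq_abs, abs_mul, abs_of_nonneg (Real.exp_pos _).le,
      Real.rpow_natCast, Real.norm_eq_abs, abs_mul, abs_of_nonneg (Real.exp_pos _).le, abs_pow]
    calc Real.exp (-(Real.sqrt θ * y - x) ^ 2 / (2 * θW)) * |y| ^ k
        ≤ (Real.exp (x ^ 2 / (2 * θW)) * Real.exp (-(θ / (4 * θW)) * y ^ 2)) * |y| ^ k :=
          mul_le_mul_of_nonneg_right (gauss_bound hθ hθW y) (by positivity)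
      _ = Real.exp (x ^ 2 / (2 * θW)) * (|y| ^ k * Real.exp (-(θ / (4 * θW)) * y ^ 2)) := by ring

lemma tendsto_g_pow (hθ : 0 < θ) (hθW : 0 < θW) (x : ℝ) (k : ℕ) :
    Tendsto (fun y : ℝ => Real.exp (-(Real.sqrt θ * y - x) ^ 2 / (2 * θW)) * y ^ k)
      atBot (nhds 0) := by
  have hb : (0:ℝ) < θ / (4 * θW) := by positivity
  have h1 : Tendsto (fun y : ℝ => |y| ^ (k:ℝ) * Real.exp (-(θ / (4 * θW)) * y ^ 2))
      atBot (nhds 0) :=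
    (tendsto_rpow_abs_mul_exp_neg_mul_sq_cocompact hb (k:ℝ)).mono_left
      (by rw [cocompact_eq_atBot_atTop]; exact le_sup_left)
  have h2 : Tendsto (fun y : ℝ => Real.exp (x ^ 2 / (2 * θW)) *
      (|y| ^ (k:ℝ) * Real.exp (-(θ / (4 * θW)) * y ^ 2))) atBot (nhds 0) := by
    simpa using h1.const_mul (Real.exp (x ^ 2 / (2 * θW)))
  apply squeeze_zero_norm _ h2
  intro y
  rw [Real.norm_eq_abs, abs_mul, abs_of_nonneg (Real.exp_pos _).le, abs_pow]
  have : |y| ^ (k:ℝ) = |y| ^ k := Real.rpow_natCast _ _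
  rw [this]
  calc Real.exp (-(Real.sqrt θ * y - x) ^ 2 / (2 * θW)) * |y| ^ k
      ≤ (Real.exp (x ^ 2 / (2 * θW)) * Real.exp (-(θ / (4 * θW)) * y ^ 2)) * |y| ^ k :=
        mul_le_mul_of_nonneg_right (gauss_bound hθ hθW y) (by positivity)
    _ = Real.exp (x ^ 2 / (2 * θW)) * (|y| ^ k * Real.exp (-(θ / (4 * θW)) * y ^ 2)) := by ring

end
section W3
variable {θ θW x : ℝ}

lemma integrable_g_He (hθ : 0 < θ) (hθW : 0 < θW) (x : ℝ) (n : ℤ) :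
    Integrable (fun y : ℝ => Real.exp (-(Real.sqrt θ * y - x) ^ 2 / (2 * θW)) * He n y) := by
  rcases lt_or_ge n 0 with h | h
  · have : (fun y : ℝ => Real.exp (-(Real.sqrt θ * y - x) ^ 2 / (2 * θW)) * He n y)
        = fun _ => 0 := funext fun y => by rw [He, if_pos h, mul_zero]
    rw [this]; exact integrable_zero _ _ _
  · obtain ⟨m, rfl⟩ : ∃ m : ℕ, n = (m : ℤ) := ⟨n.toNat, (Int.toNat_of_nonneg h).symm⟩
    have heq : (fun y : ℝ => Real.exp (-(Real.sqrt θ * y - x) ^ 2 / (2 * θW)) * He (m:ℤ) y)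
        = fun y : ℝ => ∑ i ∈ Finset.range ((Polynomial.hermite m).natDegree + 1),
            ((Polynomial.hermite m).coeff i : ℝ) *
              (Real.exp (-(Real.sqrt θ * y - x) ^ 2 / (2 * θW)) * y ^ i) := by
      funext y
      rw [He_of_nat, Polynomial.aeval_eq_sum_range, Finset.mul_sum]
      refine Finset.sum_congr rfl fun i _ => ?_
      rw [zsmul_eq_mul]; push_cast; ring
    rw [heq]
    exact integrable_finset_sum _ fun i _ => (integrable_g_pow hθ hθW x i).const_mul _

lemma tendsto_g_He (hθ : 0 < θ) (hθW : 0 < θW) (x : ℝ) (n : ℤ) :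
    Filter.Tendsto (fun y : ℝ => Real.exp (-(Real.sqrt θ * y - x) ^ 2 / (2 * θW)) * He n y)
      Filter.atBot (nhds 0) := by
  rcases lt_or_ge n 0 with h | h
  · have : (fun y : ℝ => Real.exp (-(Real.sqrt θ * y - x) ^ 2 / (2 * θW)) * He n y)
        = fun _ => 0 := funext fun y => by rw [He, if_pos h, mul_zero]
    rw [this]; exact tendsto_const_nhds
  · obtain ⟨m, rfl⟩ : ∃ m : ℕ, n = (m : ℤ) := ⟨n.toNat, (Int.toNat_of_nonneg h).symm⟩
    have heq : (fun y : ℝ => Real.exp (-(Real.sqrt θ * y - x) ^ 2 / (2 * θW)) * He (m:ℤ) y)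
        = fun y : ℝ => ∑ i ∈ Finset.range ((Polynomial.hermite m).natDegree + 1),
            ((Polynomial.hermite m).coeff i : ℝ) *
              (Real.exp (-(Real.sqrt θ * y - x) ^ 2 / (2 * θW)) * y ^ i) := by
      funext y
      rw [He_of_nat, Polynomial.aeval_eq_sum_range, Finset.mul_sum]
      refine Finset.sum_congr rfl fun i _ => ?_
      rw [zsmul_eq_mul]; push_cast; ring
    rw [heq]
    have := tendsto_finset_sum (Finset.range ((Polynomial.hermite m).natDegree + 1))
      (fun i _ => (tendsto_g_pow hθ hθW x i).const_mul (((Polynomial.hermite m).coeff i : ℝ)))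
    simpa using this

end W3
section W4
variable {θ θW x : ℝ}

lemma hasDerivAt_g (hθ : 0 < θ) (hθW : 0 < θW) (x y : ℝ) :
    HasDerivAt (fun y : ℝ => Real.exp (-(Real.sqrt θ * y - x) ^ 2 / (2 * θW)))
      (Real.exp (-(Real.sqrt θ * y - x) ^ 2 / (2 * θW)) *
        (-(2 * (Real.sqrt θ * y - x) * Real.sqrt θ) / (2 * θW))) y := by
  have h1 : HasDerivAt (fun y : ℝ => Real.sqrt θ * y - x) (Real.sqrt θ) y := by
    simpa using ((hasDerivAt_id y).const_mul (Real.sqrt θ)).sub_const x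
  have h2 := h1.pow 2
  have h3 := (h2.neg.div_const (2 * θW)).exp
  convert h3 using 1
  · rfl
  · simp only [Pi.neg_apply, Pi.pow_apply]
    ring

lemma core (hθ : 0 < θ) (hθW : 0 < θW) (x : ℝ) (n : ℕ) :
    ∫ y in Set.Iio (0:ℝ), Real.exp (-(Real.sqrt θ * y - x) ^ 2 / (2 * θW)) * He ((n:ℤ)+1) y
      = ((n:ℝ) * (θW - θ) / θ) *
          (∫ y in Set.Iio (0:ℝ), Real.exp (-(Real.sqrt θ * y - x) ^ 2 / (2 * θW)) * He ((n:ℤ)-1) y)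
        + (x / Real.sqrt θ) *
          (∫ y in Set.Iio (0:ℝ), Real.exp (-(Real.sqrt θ * y - x) ^ 2 / (2 * θW)) * He (n:ℤ) y)
        - (θW / θ) * Real.exp (-x ^ 2 / (2 * θW)) * He (n:ℤ) 0 := by
  have hs : Real.sqrt θ ≠ 0 := (Real.sqrt_pos.mpr hθ).ne'
  have hθeq : θ = Real.sqrt θ * Real.sqrt θ := (Real.mul_self_sqrt hθ.le).symm
  have hF : ∀ y : ℝ, HasDerivAt
      (fun y : ℝ => -(θW / θ) * (Real.exp (-(Real.sqrt θ * y - x) ^ 2 / (2 * θW)) * He (n:ℤ) y))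
      (Real.exp (-(Real.sqrt θ * y - x) ^ 2 / (2 * θW)) * He ((n:ℤ)+1) y
        - ((n:ℝ) * (θW - θ) / θ) *
            (Real.exp (-(Real.sqrt θ * y - x) ^ 2 / (2 * θW)) * He ((n:ℤ)-1) y)
        - (x / Real.sqrt θ) *
            (Real.exp (-(Real.sqrt θ * y - x) ^ 2 / (2 * θW)) * He (n:ℤ) y)) y := by
    intro y
    have hgy := hasDerivAt_g hθ hθW x y
    have hHe := hasDerivAt_He (n:ℤ) y
    have hprod := (hgy.mul hHe).const_mul (-(θW / θ))
    convert hprod using 1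
    · rfl
    · rfl
    · rfl
    rw [He_succ]
    push_cast
    generalize Real.exp (-(Real.sqrt θ * y - x) ^ 2 / (2 * θW)) = G
    generalize He ((n:ℤ)-1) y = A
    generalize He (n:ℤ) y = B
    field_simp
    linear_combination (G*B*(x - Real.sqrt θ*y)) * Real.sq_sqrt hθ.le
  have int1 := (integrable_g_He hθ hθW x ((n:ℤ)+1)).integrableOn (s := Set.Iic (0:ℝ))
  have int2 := ((integrable_g_He hθ hθW x ((n:ℤ)-1)).const_mul
    ((n:ℝ) * (θW - θ) / θ)).integrableOn (s := Set.Iic (0:ℝ))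
  have int3 := ((integrable_g_He hθ hθW x (n:ℤ)).const_mul
    (x / Real.sqrt θ)).integrableOn (s := Set.Iic (0:ℝ))
  have f'int : IntegrableOn (fun y : ℝ =>
      Real.exp (-(Real.sqrt θ * y - x) ^ 2 / (2 * θW)) * He ((n:ℤ)+1) y
      - ((n:ℝ) * (θW - θ) / θ) *
          (Real.exp (-(Real.sqrt θ * y - x) ^ 2 / (2 * θW)) * He ((n:ℤ)-1) y)
      - (x / Real.sqrt θ) *
          (Real.exp (-(Real.sqrt θ * y - x) ^ 2 / (2 * θW)) * He (n:ℤ) y)) (Set.Iic (0:ℝ)) :=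
    (int1.sub int2).sub int3
  have hlim : Filter.Tendsto
      (fun y : ℝ => -(θW / θ) * (Real.exp (-(Real.sqrt θ * y - x) ^ 2 / (2 * θW)) * He (n:ℤ) y))
      Filter.atBot (nhds 0) := by
    have h := (tendsto_g_He hθ hθW x (n:ℤ)).const_mul (-(θW / θ))
    rwa [mul_zero] at h
  have intA : IntegrableOn (fun y : ℝ =>
      Real.exp (-(Real.sqrt θ * y - x) ^ 2 / (2 * θW)) * He ((n:ℤ)+1) y
      - ((n:ℝ) * (θW - θ) / θ) *
          (Real.exp (-(Real.sqrt θ * y - x) ^ 2 / (2 * θW)) * He ((n:ℤ)-1) y))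
      (Set.Iic (0:ℝ)) := int1.sub int2
  have key := integral_Iic_of_hasDerivAt_of_tendsto' (fun y _ => hF y) f'int hlim
  rw [sub_zero] at key
  rw [integral_sub intA int3, integral_sub int1 int2,
    integral_const_mul, integral_const_mul] at key
  have hF0 : -(θW / θ) * (Real.exp (-(Real.sqrt θ * 0 - x) ^ 2 / (2 * θW)) * He (n:ℤ) 0)
      = -(θW / θ) * Real.exp (-x ^ 2 / (2 * θW)) * He (n:ℤ) 0 := by
    rw [show Real.sqrt θ * 0 - x = -x by ring, neg_sq]
    ring
  rw [hF0] at key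
  rw [← integral_Iic_eq_integral_Iio, ← integral_Iic_eq_integral_Iio,
    ← integral_Iic_eq_integral_Iio]
  linear_combination key

end W4
section W5
variable {θ θW : ℝ}

lemma Jt_nat (θ θW : ℝ) (x : ℝ) (k : ℕ) :
    Jt θ θW (k : ℤ) x = (1 / (Nat.factorial k : ℝ)) * θ ^ (((k:ℝ) + 1) / 2) *
      ((2 * Real.pi * θW) ^ (-(1:ℝ)/2) *
        ∫ y in Set.Iio (0:ℝ), Real.exp (-(Real.sqrt θ * y - x) ^ 2 / (2 * θW)) * He (k:ℤ) y) := by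
  rw [Jt, if_neg (by omega), Int.toNat_natCast]
  have hpull : (∫ y in Set.Iio (0:ℝ), (2 * Real.pi * θW) ^ (-(1:ℝ)/2) *
        Real.exp (-(Real.sqrt θ * y - x) ^ 2 / (2 * θW)) * He (k:ℤ) y)
      = (2 * Real.pi * θW) ^ (-(1:ℝ)/2) *
        ∫ y in Set.Iio (0:ℝ), Real.exp (-(Real.sqrt θ * y - x) ^ 2 / (2 * θW)) * He (k:ℤ) y := by
    simp_rw [mul_assoc]
    exact integral_const_mul _ _
  rw [hpull]
  push_cast
  ring

lemma fact3 (hθW : 0 < θW) :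
    θW * (2 * Real.pi * θW) ^ (-(1:ℝ)/2) = Real.sqrt (θW / (2 * Real.pi)) := by
  have h2π : (0:ℝ) < 2 * Real.pi := by positivity
  have hsW : Real.sqrt θW * Real.sqrt θW = θW := Real.mul_self_sqrt hθW.le
  have h2 : Real.sqrt (2 * Real.pi) ≠ 0 := by positivity
  have h3 : Real.sqrt θW ≠ 0 := by positivity
  rw [show (-(1:ℝ)/2) = -(1/2 : ℝ) by norm_num, Real.rpow_neg (by positivity),
    ← Real.sqrt_eq_rpow, Real.sqrt_mul h2π.le, Real.sqrt_div hθW.le, ← hsW]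
  field_simp
  rw [Real.sq_sqrt (by positivity), sq, hsW]

end W5
/-- For `s ≥ 1`, `J̃_s(x) = (1/s)[(θ^W − θ) J̃_{s−2}(x) + x J̃_{s−1}(x)] − H_s(x)`. -/
theorem Jt_recursion (θ θW : ℝ) (hθ : 0 < θ) (hθW : 0 < θW) (s : ℕ) (hs : 1 ≤ s)
    (x : ℝ) :
    Jt θ θW s x = (1 / (s : ℝ)) *
        ((θW - θ) * Jt θ θW ((s : ℤ) - 2) x + x * Jt θ θW ((s : ℤ) - 1) x)
      - HH θ θW s x := by
  have hsθ : Real.sqrt θ * Real.sqrt θ = θ := Real.mul_self_sqrt hθ.le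
  have hsθ0 : Real.sqrt θ ≠ 0 := (Real.sqrt_pos.mpr hθ).ne'
  obtain ⟨n, rfl⟩ : ∃ n, s = n + 1 := ⟨s - 1, (Nat.succ_pred_eq_of_pos hs).symm⟩
  have hcore := core hθ hθW x n
  have hcast : ((n+1:ℕ):ℤ) = (n:ℤ) + 1 := by push_cast; ring
  rw [← hcast] at hcore
  have hJs := Jt_nat θ θW x (n+1)
  have hJs1 : Jt θ θW (((n+1:ℕ):ℤ) - 1) x = Jt θ θW ((n:ℕ):ℤ) x := by
    congr 1; push_cast; ring
  have hJn := Jt_nat θ θW x n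
  rw [hJs, hJs1, hJn, hcore, HH]
  cases n with
  | zero =>
    have hJm2 : Jt θ θW (((0+1:ℕ):ℤ) - 2) x = 0 := by
      rw [Jt, if_pos (by omega)]
    rw [hJm2]
    have hHe0 : He (0:ℤ) 0 = 1 := by
      rw [He, if_neg (by omega)]
      simp [Polynomial.hermite_zero]
    have hrp1 : θ ^ ((((0+1:ℕ):ℝ) + 1) / 2) = θ := by
      norm_num
    have hrp2 : θ ^ ((((0:ℕ):ℝ) + 1) / 2) = Real.sqrt θ := by
      norm_num [Real.sqrt_eq_rpow]
    have hrp3 : θ ^ ((((0+1:ℕ):ℝ) - 1) / 2) = 1 := by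
      norm_num
    rw [hrp1, hrp2, hrp3] at *
    norm_num [hHe0, Nat.factorial, ← fact3 hθW]
    field_simp
    linear_combination (-(x *
      (∫ y in Set.Iio (0:ℝ), Real.exp (-((Real.sqrt θ * y - x)^2/(2*θW))) * He 0 y))) * hsθ
  | succ m =>
    have hJm2 : Jt θ θW (((m+1+1:ℕ):ℤ) - 2) x = Jt θ θW ((m:ℕ):ℤ) x := by
      congr 1; push_cast; ring
    rw [hJm2, Jt_nat θ θW x m,
      show ((m+1:ℕ):ℤ) - 1 = ((m:ℕ):ℤ) by push_cast; ring,
      show ((((m+1+1:ℕ)):ℝ) - 1)/2 = (((m:ℕ):ℝ)+1)/2 by push_cast; ring,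
      show θ ^ (((((m+1+1:ℕ)):ℝ)+1)/2) = θ ^ ((((m:ℕ):ℝ)+1)/2) * θ by
        rw [show (((((m+1+1:ℕ)):ℝ))+1)/2 = ((((m:ℕ):ℝ)+1)/2) + 1 by push_cast; ring,
          Real.rpow_add hθ, Real.rpow_one],
      show θ ^ (((((m+1:ℕ)):ℝ)+1)/2) = Real.sqrt θ * θ ^ ((((m:ℕ):ℝ)+1)/2) by
        rw [show (((((m+1:ℕ)):ℝ))+1)/2 = (1/2 : ℝ) + ((((m:ℕ):ℝ)+1)/2) by push_cast; ring,
          Real.rpow_add hθ, ← Real.sqrt_eq_rpow],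
      ← fact3 hθW,
      show (((m+1+1).factorial : ℕ):ℝ) = (((m:ℕ):ℝ)+2)*(((m:ℕ):ℝ)+1)*(m.factorial : ℝ) by
        rw [Nat.factorial_succ, Nat.factorial_succ]; push_cast; ring,
      show (((m+1).factorial : ℕ):ℝ) = (((m:ℕ):ℝ)+1)*(m.factorial : ℝ) by
        rw [Nat.factorial_succ]; push_cast; ring,
      show (((m+1+1:ℕ)):ℝ) = (((m:ℕ):ℝ)+2) by push_cast; ring,
      show (((m+1:ℕ)):ℝ) = (((m:ℕ):ℝ)+1) by push_cast; ring]
    have hfac : ((m.factorial : ℕ):ℝ) ≠ 0 := Nat.cast_ne_zero.mpr (Nat.factorial_ne_zero m)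
    have hm1 : (((m:ℕ):ℝ)+1) ≠ 0 := by positivity
    have hm2 : (((m:ℕ):ℝ)+2) ≠ 0 := by positivity
    set u := Real.sqrt θ with hu
    rw [← hsθ]
    rw [show ((m+1+1:ℕ):ℤ) - 1 = ((m+1:ℕ):ℤ) by push_cast; ring]
    generalize (∫ y in Set.Iio (0:ℝ), Real.exp (-(u * y - x) ^ 2 / (2 * θW)) * He ((m:ℕ):ℤ) y) = A
    generalize (∫ y in Set.Iio (0:ℝ), Real.exp (-(u * y - x) ^ 2 / (2 * θW)) * He ((m+1:ℕ):ℤ) y) = B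
    field_simp
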